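/- Let n ≥ 3. Then the number of permutations p of {1,…,n} in which the first entry p_1 has exactly one child in the minmax tree T^m_p is exactly 2·n!/3. -/

import Mathlib

/-- Binary trees with natural-number labels, used to model minmax trees of
permutations. -/
inductive BTree where
  | nil : BTree
  | node : ℕ → BTree → BTree → BTree
deriving DecidableEq, Repr

namespace BTree

/-- The label of the root (if any). -/
def rootVal : BTree → Option ℕ
  | .nil => none
  | .node v _ _ => some v

/-- Whether the value `x` occurs as a label in the tree. -/
def memB : BTree → ℕ → Bool
  | .nil, _ => false
  | .node v l r, x => (x == v) || memB l x || memB r x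

/-- The number of children of the (unique, for permutations) node labelled `x`. -/
def numChildren : BTree → ℕ → ℕ
  | .nil, _ => 0
  | .node v l r, x =>
      if x = v then (if l = .nil then 0 else 1) + (if r = .nil then 0 else 1)
      else numChildren l x + numChildren r x

/-- `x` is a leaf of the tree: it occurs in the tree and has no children. -/
def IsLeaf (t : BTree) (x : ℕ) : Prop := t.memB x = true ∧ t.numChildren x = 0

instance (t : BTree) (x : ℕ) : Decidable (t.IsLeaf x) := by unfold IsLeaf; infer_instance

/-- `childB t x y = true` iff `x` is a child of `y` in `t`, i.e. `x` is the root of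
the left or the right subtree hanging from `y`. -/
def childB : BTree → ℕ → ℕ → Bool
  | .nil, _, _ => false
  | .node v l r, x, y =>
      ((y == v) && (l.rootVal == some x || r.rootVal == some x))
      || childB l x y || childB r x y

/-- `ancB t x y = true` iff `x` is a (strict) ancestor of `y` in `t`, i.e. `y` lies
in a subtree hanging from `x`. -/
def ancB : BTree → ℕ → ℕ → Bool
  | .nil, _, _ => false
  | .node v l r, x, y =>
      ((x == v) && (memB l y || memB r y)) || ancB l x y || ancB r x y

end BTree

/-- `x` is the leftmost-eligible extreme letter of `l`: the minimum or the maximum. -/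
def isExtreme (l : List ℕ) (x : ℕ) : Bool :=
  (l.min? == some x) || (l.max? == some x)

/-- Fuelled construction of the minmax tree of a list of distinct naturals:
split the list as `u ++ [m] ++ v` where `m` is the leftmost of the minimum and
maximum letters, put `m` at the root and recurse on `u` (left) and `v` (right). -/
def mmAux : ℕ → List ℕ → BTree
  | 0, _ => .nil
  | fuel+1, l =>
    if l.isEmpty then .nil
    else
      let k := l.findIdx (isExtreme l)
      .node (l.getD k 0) (mmAux fuel (l.take k)) (mmAux fuel (l.drop (k+1)))

/-- The minmax tree `T^m_p` of a word `l` (with distinct letters). -/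
def minmaxTree (l : List ℕ) : BTree := mmAux l.length l

/-- The word `p_1 p_2 … p_n` on the letters `{1,…,n}` associated to a permutation
`p` of `Fin n`. -/
def permList (n : ℕ) (p : Equiv.Perm (Fin n)) : List ℕ :=
  List.ofFn (fun i => (p i : ℕ) + 1)

/-- The `i`-th entry `p_i` (1-indexed) of the permutation `p`. -/
def entryAt (n : ℕ) (p : Equiv.Perm (Fin n)) (i : ℕ) : ℕ :=
  (permList n p).getD (i - 1) 0


section Aux

open List

/-! ### `min?`/`max?` and `isExtreme` under permutation -/

lemma min?_perm {l l' : List ℕ} (h : l.Perm l') : l.min? = l'.min? := by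
  cases hm : l'.min? with
  | none =>
    rw [List.min?_eq_none_iff] at hm ⊢
    exact (hm ▸ h).eq_nil
  | some a =>
    rw [List.min?_eq_some_iff'] at hm ⊢
    exact ⟨h.mem_iff.mpr hm.1, fun b hb => hm.2 b (h.mem_iff.mp hb)⟩

lemma max?_perm {l l' : List ℕ} (h : l.Perm l') : l.max? = l'.max? := by
  cases hm : l'.max? with
  | none =>
    rw [List.max?_eq_none_iff] at hm ⊢
    exact (hm ▸ h).eq_nil
  | some a =>
    rw [List.max?_eq_some_iff'] at hm ⊢
    exact ⟨h.mem_iff.mpr hm.1, fun b hb => hm.2 b (h.mem_iff.mp hb)⟩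

lemma isExtreme_perm {l l' : List ℕ} (h : l.Perm l') : isExtreme l = isExtreme l' := by
  funext x
  unfold isExtreme
  rw [min?_perm h, max?_perm h]

lemma exists_extreme {l : List ℕ} (h : l ≠ []) : ∃ x ∈ l, isExtreme l x = true := by
  cases hm : l.min? with
  | none => rw [List.min?_eq_none_iff] at hm; exact absurd hm h
  | some m =>
    exact ⟨m, (List.min?_eq_some_iff'.mp hm).1, by simp [isExtreme, hm]⟩

lemma findIdx_lt {l : List ℕ} (h : l ≠ []) :
    l.findIdx (isExtreme l) < l.length :=
  List.findIdx_lt_length_of_exists (exists_extreme h)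

lemma extreme_cases {l : List ℕ} {x : ℕ} (h : isExtreme l x = true) :
    l.min? = some x ∨ l.max? = some x := by
  unfold isExtreme at h
  rcases Bool.or_eq_true_iff.mp h with h | h
  · exact Or.inl (by simpa using h)
  · exact Or.inr (by simpa using h)

/-! ### Fuel lemmas -/

lemma mmAux_nil (f : ℕ) : mmAux f [] = .nil := by cases f <;> simp [mmAux]

lemma mmAux_ne_nil {f : ℕ} {l : List ℕ} (hf : 1 ≤ f) (hl : l ≠ []) :
    mmAux f l ≠ .nil := by
  match f with
  | f + 1 =>
    have he : l.isEmpty = false := by simp [hl]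
    simp [mmAux, he]

lemma mmAux_fuel_aux : ∀ (n f g : ℕ) (l : List ℕ), l.length ≤ n → l.length ≤ f →
    l.length ≤ g → mmAux f l = mmAux g l := by
  intro n
  induction n with
  | zero =>
    intro f g l hn _ _
    have : l = [] := List.length_eq_zero_iff.mp (Nat.le_zero.mp hn)
    subst this
    rw [mmAux_nil, mmAux_nil]
  | succ n ih =>
    intro f g l hn hf hg
    by_cases hl : l = []
    · subst hl; rw [mmAux_nil, mmAux_nil]
    · have hpos : 1 ≤ l.length := List.length_pos_iff.mpr hl
      obtain ⟨f', rfl⟩ : ∃ f', f = f' + 1 := ⟨f - 1, by omega⟩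
      obtain ⟨g', rfl⟩ : ∃ g', g = g' + 1 := ⟨g - 1, by omega⟩
      have he : l.isEmpty = false := by simp [hl]
      have hk := findIdx_lt hl
      rw [mmAux, mmAux]
      simp only [he, Bool.false_eq_true, if_false]
      have h1 : (l.take (l.findIdx (isExtreme l))).length ≤ n := by
        simp only [List.length_take]; omega
      have h2 : (l.drop (l.findIdx (isExtreme l) + 1)).length ≤ n := by
        simp only [List.length_drop]; omega
      rw [ih f' g' _ h1 (by simp only [List.length_take]; omega)
            (by simp only [List.length_take]; omega),
          ih f' g' _ h2 (by simp only [List.length_drop]; omega)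
            (by simp only [List.length_drop]; omega)]

lemma mmAux_fuel {f g : ℕ} {l : List ℕ} (hf : l.length ≤ f) (hg : l.length ≤ g) :
    mmAux f l = mmAux g l :=
  mmAux_fuel_aux l.length f g l le_rfl hf hg

/-! ### `goodB`: whether the first entry is a non-leaf -/

def goodB : ℕ → List ℕ → Bool
  | 0, _ => false
  | f + 1, l =>
    if l.length < 2 then false
    else
      let k := l.findIdx (isExtreme l)
      if k = 0 then true else goodB f (l.take k)

lemma goodB_nil (f : ℕ) : goodB f [] = false := by cases f <;> simp [goodB]

lemma goodB_fuel_aux : ∀ (n f g : ℕ) (l : List ℕ), l.length ≤ n → l.length ≤ f →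
    l.length ≤ g → goodB f l = goodB g l := by
  intro n
  induction n with
  | zero =>
    intro f g l hn _ _
    have : l = [] := List.length_eq_zero_iff.mp (Nat.le_zero.mp hn)
    subst this
    rw [goodB_nil, goodB_nil]
  | succ n ih =>
    intro f g l hn hf hg
    by_cases hl : l = []
    · subst hl; rw [goodB_nil, goodB_nil]
    · have hpos : 1 ≤ l.length := List.length_pos_iff.mpr hl
      obtain ⟨f', rfl⟩ : ∃ f', f = f' + 1 := ⟨f - 1, by omega⟩
      obtain ⟨g', rfl⟩ : ∃ g', g = g' + 1 := ⟨g - 1, by omega⟩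
      have hk := findIdx_lt hl
      rw [goodB, goodB]
      by_cases h2 : l.length < 2
      · simp only [h2, if_true]
      · simp only [h2, if_false]
        by_cases hk0 : l.findIdx (isExtreme l) = 0
        · simp [hk0]
        · simp only [if_neg hk0]
          exact ih _ _ _ (by simp only [List.length_take]; omega)
            (by simp only [List.length_take]; omega)
            (by simp only [List.length_take]; omega)

lemma goodB_fuel {f g : ℕ} {l : List ℕ} (hf : l.length ≤ f) (hg : l.length ≤ g) :
    goodB f l = goodB g l :=
  goodB_fuel_aux l.length f g l le_rfl hf hg

def Good (l : List ℕ) : Bool := goodB l.length l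

lemma good_unfold {l : List ℕ} (h2 : 2 ≤ l.length) :
    Good l = if l.findIdx (isExtreme l) = 0 then true
      else Good (l.take (l.findIdx (isExtreme l))) := by
  have hne : l ≠ [] := by intro h; subst h; simp at h2
  have hk := findIdx_lt hne
  obtain ⟨m, hm⟩ : ∃ m, l.length = m + 2 := ⟨l.length - 2, by omega⟩
  unfold Good
  rw [show goodB l.length l = goodB (m + 2) l from by rw [hm], goodB]
  simp only [show ¬ (l.length < 2) from by omega, if_false]
  by_cases hk0 : l.findIdx (isExtreme l) = 0
  · simp [hk0]
  · simp only [if_neg hk0]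
    exact goodB_fuel (by simp only [List.length_take]; omega)
      (by simp only [List.length_take]; omega)

lemma good_single (x : ℕ) : Good [x] = false := by simp [Good, goodB]

lemma good_pair {x y : ℕ} (h : x ≠ y) : Good [x, y] = true := by
  have hmin : [x, y].min? = some (min x y) := by
    simp [List.min?]
  have hmax : [x, y].max? = some (max x y) := by
    simp [List.max?]
  have hext : isExtreme [x, y] x = true := by
    unfold isExtreme
    rw [hmin, hmax]
    rcases Nat.le_total x y with hxy | hxy
    · simp [Nat.min_eq_left hxy]
    · simp [Nat.max_eq_left hxy]
  have hidx : [x, y].findIdx (isExtreme [x, y]) = 0 := by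
    rw [List.findIdx_cons, hext]; rfl
  rw [good_unfold (by simp), hidx]
  rfl

/-! ### Trees contain only list elements; numChildren vanishes off-support -/

lemma numChildren_mmAux_eq_zero : ∀ (f : ℕ) (l : List ℕ) (x : ℕ), x ∉ l →
    (mmAux f l).numChildren x = 0 := by
  intro f
  induction f with
  | zero => intro l x _; simp [mmAux, BTree.numChildren]
  | succ f ih =>
    intro l x hx
    by_cases hl : l = []
    · subst hl; simp [mmAux, BTree.numChildren]
    · have he : l.isEmpty = false := by simp [hl]
      have hk := findIdx_lt hl
      rw [mmAux]
      simp only [he, Bool.false_eq_true, if_false]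
      rw [BTree.numChildren]
      have hv : l.getD (l.findIdx (isExtreme l)) 0 ∈ l := by
        rw [List.getD_eq_getElem?_getD, List.getElem?_eq_getElem hk]
        exact List.getElem_mem hk
      rw [if_neg (fun h => hx (by rw [h]; exact hv)),
        ih _ _ (fun h => hx (List.mem_of_mem_take h)),
        ih _ _ (fun h => hx (List.mem_of_mem_drop h))]

/-! ### Main reduction: numChildren of the first entry equals `if Good then 1 else 0` -/

lemma numChildren_head_aux : ∀ (n : ℕ) (l : List ℕ), l.length ≤ n → l.Nodup →
    l ≠ [] → (minmaxTree l).numChildren (l.getD 0 0) = if Good l then 1 else 0 := by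
  intro n
  induction n with
  | zero =>
    intro l hn _ hne
    exact absurd (List.length_eq_zero_iff.mp (Nat.le_zero.mp hn)) hne
  | succ n ih =>
    intro l hn hnd hne
    have hpos : 1 ≤ l.length := List.length_pos_iff.mpr hne
    have hk := findIdx_lt hne
    have he : l.isEmpty = false := by simp [hne]
    obtain ⟨m, hm⟩ : ∃ m, l.length = m + 1 := ⟨l.length - 1, by omega⟩
    unfold minmaxTree
    rw [show mmAux l.length l = mmAux (m + 1) l from by rw [hm], mmAux]
    simp only [he, Bool.false_eq_true, if_false]
    rw [BTree.numChildren]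
    by_cases hk0 : l.findIdx (isExtreme l) = 0
    · rw [if_pos (by rw [hk0])]
      rw [hk0, List.take_zero, mmAux_nil]
      simp only [if_pos rfl]
      match m, hm with
      | 0, hm =>
        have : l.drop 1 = [] := by
          apply List.length_eq_zero_iff.mp
          simp [List.length_drop, hm]
        rw [this, mmAux_nil]
        have : Good l = false := by
          unfold Good
          rw [show goodB l.length l = goodB 1 l from by rw [hm], goodB]
          simp [hm]
        rw [this]
        simp
      | m + 1, hm =>
        have hd : l.drop 1 ≠ [] := by
          intro h
          have := congrArg List.length h
          simp [List.length_drop, hm] at this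
        rw [if_neg (mmAux_ne_nil (by omega) hd)]
        have : Good l = true := by
          rw [good_unfold (by omega), hk0]
          rfl
        rw [this]
        simp
    · -- first entry differs from the root
      have hne0k : l.getD 0 0 ≠ l.getD (l.findIdx (isExtreme l)) 0 := by
        rw [List.getD_eq_getElem?_getD, List.getElem?_eq_getElem (by omega),
          List.getD_eq_getElem?_getD, List.getElem?_eq_getElem hk]
        simp only [Option.getD_some]
        intro h
        exact hk0 ((hnd.getElem_inj_iff).mp h).symm
      rw [if_neg hne0k]
      have hxdrop : l.getD 0 0 ∉ l.drop (l.findIdx (isExtreme l) + 1) := by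
        intro hmem
        rw [List.getD_eq_getElem?_getD, List.getElem?_eq_getElem (by omega)] at hmem
        simp only [Option.getD_some] at hmem
        obtain ⟨i, hi, hieq⟩ := List.mem_iff_getElem.mp hmem
        rw [List.getElem_drop] at hieq
        have := (hnd.getElem_inj_iff).mp hieq.symm
        omega
      rw [numChildren_mmAux_eq_zero _ _ _ hxdrop]
      set k := l.findIdx (isExtreme l) with hkdef
      have hklen : (l.take k).length = k := by simp [List.length_take]; omega
      have htne : l.take k ≠ [] := by
        intro h
        have := congrArg List.length h
        rw [hklen] at this
        simp at this
        exact hk0 this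
      have hmm : mmAux m (l.take k) = minmaxTree (l.take k) := by
        unfold minmaxTree
        exact mmAux_fuel (by omega) le_rfl
      have hgetd : (l.take k).getD 0 0 = l.getD 0 0 := by
        rw [List.getD_eq_getElem?_getD, List.getD_eq_getElem?_getD,
          List.getElem?_take_of_lt (by omega)]
      rw [hmm, ← hgetd,
        ih (l.take k) (by omega) (hnd.sublist (List.take_sublist _ _)) htne]
      have : Good l = Good (l.take k) := by
        rw [good_unfold (by omega), if_neg hk0]
      rw [this]
      omega

lemma numChildren_head {l : List ℕ} (hnd : l.Nodup) (hne : l ≠ []) :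
    (minmaxTree l).numChildren (l.getD 0 0) = if Good l then 1 else 0 :=
  numChildren_head_aux l.length l le_rfl hnd hne

end Aux


section Rotation

open List

/-- Among the three cyclic rotations of the first three letters, exactly two give
a word whose first entry is a non-leaf of the minmax tree. -/
lemma rot_aux : ∀ (n : ℕ) (t : List ℕ) (a b c : ℕ), t.length < n →
    (a :: b :: c :: t).Nodup →
    (if Good (a :: b :: c :: t) then 1 else 0) +
      (if Good (b :: c :: a :: t) then 1 else 0) +
      (if Good (c :: a :: b :: t) then 1 else 0) = 2 := by
  intro n
  induction n with
  | zero => intro t a b c h; omega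
  | succ n ih =>
    intro t a b c hlt hnd
    have h12 : (a :: b :: c :: t).Perm (b :: c :: a :: t) :=
      (List.Perm.swap b a (c :: t)).trans (List.Perm.cons b (List.Perm.swap c a t))
    have h23 : (b :: c :: a :: t).Perm (c :: a :: b :: t) :=
      (List.Perm.swap c b (a :: t)).trans (List.Perm.cons c (List.Perm.swap a b t))
    have h13 := h12.trans h23
    have e2 : isExtreme (b :: c :: a :: t) = isExtreme (a :: b :: c :: t) :=
      (isExtreme_perm h12).symm
    have e3 : isExtreme (c :: a :: b :: t) = isExtreme (a :: b :: c :: t) :=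
      (isExtreme_perm h13).symm
    have hnd' := hnd
    simp only [List.nodup_cons, List.mem_cons, not_or] at hnd'
    obtain ⟨⟨hab, hac, hat⟩, ⟨hbc, hbt⟩, hct, hnt⟩ := hnd'
    have h2l : 2 ≤ (a :: b :: c :: t).length := by simp
    have h2l2 : 2 ≤ (b :: c :: a :: t).length := by simp
    have h2l3 : 2 ≤ (c :: a :: b :: t).length := by simp
    cases hea : isExtreme (a :: b :: c :: t) a <;>
      cases heb : isExtreme (a :: b :: c :: t) b <;>
        cases hec : isExtreme (a :: b :: c :: t) c
    -- case FFF : all extremes lie in t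
    · obtain ⟨x, hx, hex⟩ := exists_extreme (l := a :: b :: c :: t) (by simp)
      have hxt : x ∈ t := by
        simp only [List.mem_cons] at hx
        rcases hx with rfl | rfl | rfl | hxt
        · rw [hea] at hex; exact absurd hex (by simp)
        · rw [heb] at hex; exact absurd hex (by simp)
        · rw [hec] at hex; exact absurd hex (by simp)
        · exact hxt
      set kt := t.findIdx (isExtreme (a :: b :: c :: t)) with hktdef
      have hktlt : kt < t.length := List.findIdx_lt_length_of_exists ⟨x, hxt, hex⟩
      have hk1 : (a :: b :: c :: t).findIdx (isExtreme (a :: b :: c :: t)) = kt + 1 + 1 + 1 := by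
        simp only [List.findIdx_cons, hea, heb, hec, Bool.cond_false, ← hktdef]
      have hk2 : (b :: c :: a :: t).findIdx (isExtreme (b :: c :: a :: t)) = kt + 1 + 1 + 1 := by
        simp only [e2, List.findIdx_cons, hea, heb, hec, Bool.cond_false, ← hktdef]
      have hk3 : (c :: a :: b :: t).findIdx (isExtreme (c :: a :: b :: t)) = kt + 1 + 1 + 1 := by
        simp only [e3, List.findIdx_cons, hea, heb, hec, Bool.cond_false, ← hktdef]
      have g1 : Good (a :: b :: c :: t) = Good (a :: b :: c :: (t.take kt)) := by
        rw [good_unfold h2l, hk1, if_neg (by omega)]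
        simp [List.take_succ_cons]
      have g2 : Good (b :: c :: a :: t) = Good (b :: c :: a :: (t.take kt)) := by
        rw [good_unfold h2l2, hk2, if_neg (by omega)]
        simp [List.take_succ_cons]
      have g3 : Good (c :: a :: b :: t) = Good (c :: a :: b :: (t.take kt)) := by
        rw [good_unfold h2l3, hk3, if_neg (by omega)]
        simp [List.take_succ_cons]
      rw [g1, g2, g3]
      have hsub : a :: b :: c :: (t.take kt) <+ a :: b :: c :: t :=
        ((List.take_sublist kt t).cons₂ c).cons₂ b |>.cons₂ a
      exact ih (t.take kt) a b c (by simp only [List.length_take]; omega) (hnd.sublist hsub)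
    -- case FFT
    · have hk1 : (a :: b :: c :: t).findIdx (isExtreme (a :: b :: c :: t)) = 2 := by
        simp only [List.findIdx_cons, hea, heb, hec, Bool.cond_false, Bool.cond_true]
      have hk2 : (b :: c :: a :: t).findIdx (isExtreme (b :: c :: a :: t)) = 1 := by
        simp only [e2, List.findIdx_cons, hea, heb, hec, Bool.cond_false, Bool.cond_true]
      have hk3 : (c :: a :: b :: t).findIdx (isExtreme (c :: a :: b :: t)) = 0 := by
        simp only [e3, List.findIdx_cons, hea, heb, hec, Bool.cond_false, Bool.cond_true]
      have g1 : Good (a :: b :: c :: t) = true := by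
        rw [good_unfold h2l, hk1]; simp [good_pair hab]
      have g2 : Good (b :: c :: a :: t) = false := by
        rw [good_unfold h2l2, hk2]; simp [good_single]
      have g3 : Good (c :: a :: b :: t) = true := by
        rw [good_unfold h2l3, hk3]; simp
      rw [g1, g2, g3]; simp
    -- case FTF
    · have hk1 : (a :: b :: c :: t).findIdx (isExtreme (a :: b :: c :: t)) = 1 := by
        simp only [List.findIdx_cons, hea, heb, hec, Bool.cond_false, Bool.cond_true]
      have hk2 : (b :: c :: a :: t).findIdx (isExtreme (b :: c :: a :: t)) = 0 := by
        simp only [e2, List.findIdx_cons, hea, heb, hec, Bool.cond_false, Bool.cond_true]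
      have hk3 : (c :: a :: b :: t).findIdx (isExtreme (c :: a :: b :: t)) = 2 := by
        simp only [e3, List.findIdx_cons, hea, heb, hec, Bool.cond_false, Bool.cond_true]
      have g1 : Good (a :: b :: c :: t) = false := by
        rw [good_unfold h2l, hk1]; simp [good_single]
      have g2 : Good (b :: c :: a :: t) = true := by
        rw [good_unfold h2l2, hk2]; simp
      have g3 : Good (c :: a :: b :: t) = true := by
        rw [good_unfold h2l3, hk3]; simp [good_pair (fun h => hac h.symm)]
      rw [g1, g2, g3]; simp
    -- case FTT
    · have hk1 : (a :: b :: c :: t).findIdx (isExtreme (a :: b :: c :: t)) = 1 := by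
        simp only [List.findIdx_cons, hea, heb, hec, Bool.cond_false, Bool.cond_true]
      have hk2 : (b :: c :: a :: t).findIdx (isExtreme (b :: c :: a :: t)) = 0 := by
        simp only [e2, List.findIdx_cons, hea, heb, hec, Bool.cond_false, Bool.cond_true]
      have hk3 : (c :: a :: b :: t).findIdx (isExtreme (c :: a :: b :: t)) = 0 := by
        simp only [e3, List.findIdx_cons, hea, heb, hec, Bool.cond_false, Bool.cond_true]
      have g1 : Good (a :: b :: c :: t) = false := by
        rw [good_unfold h2l, hk1]; simp [good_single]
      have g2 : Good (b :: c :: a :: t) = true := by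
        rw [good_unfold h2l2, hk2]; simp
      have g3 : Good (c :: a :: b :: t) = true := by
        rw [good_unfold h2l3, hk3]; simp
      rw [g1, g2, g3]; simp
    -- case TFF
    · have hk1 : (a :: b :: c :: t).findIdx (isExtreme (a :: b :: c :: t)) = 0 := by
        simp only [List.findIdx_cons, hea, heb, hec, Bool.cond_false, Bool.cond_true]
      have hk2 : (b :: c :: a :: t).findIdx (isExtreme (b :: c :: a :: t)) = 2 := by
        simp only [e2, List.findIdx_cons, hea, heb, hec, Bool.cond_false, Bool.cond_true]
      have hk3 : (c :: a :: b :: t).findIdx (isExtreme (c :: a :: b :: t)) = 1 := by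
        simp only [e3, List.findIdx_cons, hea, heb, hec, Bool.cond_false, Bool.cond_true]
      have g1 : Good (a :: b :: c :: t) = true := by
        rw [good_unfold h2l, hk1]; simp
      have g2 : Good (b :: c :: a :: t) = true := by
        rw [good_unfold h2l2, hk2]; simp [good_pair hbc]
      have g3 : Good (c :: a :: b :: t) = false := by
        rw [good_unfold h2l3, hk3]; simp [good_single]
      rw [g1, g2, g3]; simp
    -- case TFT
    · have hk1 : (a :: b :: c :: t).findIdx (isExtreme (a :: b :: c :: t)) = 0 := by
        simp only [List.findIdx_cons, hea, heb, hec, Bool.cond_false, Bool.cond_true]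
      have hk2 : (b :: c :: a :: t).findIdx (isExtreme (b :: c :: a :: t)) = 1 := by
        simp only [e2, List.findIdx_cons, hea, heb, hec, Bool.cond_false, Bool.cond_true]
      have hk3 : (c :: a :: b :: t).findIdx (isExtreme (c :: a :: b :: t)) = 0 := by
        simp only [e3, List.findIdx_cons, hea, heb, hec, Bool.cond_false, Bool.cond_true]
      have g1 : Good (a :: b :: c :: t) = true := by
        rw [good_unfold h2l, hk1]; simp
      have g2 : Good (b :: c :: a :: t) = false := by
        rw [good_unfold h2l2, hk2]; simp [good_single]
      have g3 : Good (c :: a :: b :: t) = true := by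
        rw [good_unfold h2l3, hk3]; simp
      rw [g1, g2, g3]; simp
    -- case TTF
    · have hk1 : (a :: b :: c :: t).findIdx (isExtreme (a :: b :: c :: t)) = 0 := by
        simp only [List.findIdx_cons, hea, heb, hec, Bool.cond_false, Bool.cond_true]
      have hk2 : (b :: c :: a :: t).findIdx (isExtreme (b :: c :: a :: t)) = 0 := by
        simp only [e2, List.findIdx_cons, hea, heb, hec, Bool.cond_false, Bool.cond_true]
      have hk3 : (c :: a :: b :: t).findIdx (isExtreme (c :: a :: b :: t)) = 1 := by
        simp only [e3, List.findIdx_cons, hea, heb, hec, Bool.cond_false, Bool.cond_true]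
      have g1 : Good (a :: b :: c :: t) = true := by
        rw [good_unfold h2l, hk1]; simp
      have g2 : Good (b :: c :: a :: t) = true := by
        rw [good_unfold h2l2, hk2]; simp
      have g3 : Good (c :: a :: b :: t) = false := by
        rw [good_unfold h2l3, hk3]; simp [good_single]
      rw [g1, g2, g3]; simp
    -- case TTT : impossible
    · exfalso
      rcases extreme_cases hea with h1 | h1 <;> rcases extreme_cases heb with h2 | h2 <;>
        rcases extreme_cases hec with h3 | h3 <;> simp_all

end Rotation

section Assembly

/-- The 3-cycle `(0 1 2)` on positions. -/
def cyc (m : ℕ) : Equiv.Perm (Fin (m + 3)) := (Equiv.swap 0 1).trans (Equiv.swap 0 2)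

lemma fin01 (m : ℕ) : (0 : Fin (m + 3)) ≠ 1 := by simp [Fin.ext_iff]
lemma fin02 (m : ℕ) : (0 : Fin (m + 3)) ≠ 2 := by simp [Fin.ext_iff, Nat.mod_eq_of_lt (show 2 < m + 3 by omega)]
lemma fin12 (m : ℕ) : (1 : Fin (m + 3)) ≠ 2 := by simp [Fin.ext_iff, Nat.mod_eq_of_lt (show 2 < m + 3 by omega)]

lemma cyc_zero (m : ℕ) : cyc m 0 = 1 := by
  rw [cyc, Equiv.trans_apply, Equiv.swap_apply_left,
    Equiv.swap_apply_of_ne_of_ne (fin01 m).symm (fin12 m)]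

lemma cyc_one (m : ℕ) : cyc m 1 = 2 := by
  rw [cyc, Equiv.trans_apply, Equiv.swap_apply_right, Equiv.swap_apply_left]

lemma cyc_two (m : ℕ) : cyc m 2 = 0 := by
  rw [cyc, Equiv.trans_apply,
    Equiv.swap_apply_of_ne_of_ne (fin02 m).symm (fin12 m).symm, Equiv.swap_apply_right]

lemma fin3_ne (m : ℕ) (i : Fin m) :
    (i.succ.succ.succ : Fin (m + 3)) ≠ 0 ∧ (i.succ.succ.succ : Fin (m + 3)) ≠ 1 ∧
      (i.succ.succ.succ : Fin (m + 3)) ≠ 2 := by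
  refine ⟨?_, ?_, ?_⟩ <;> · simp [Fin.ext_iff, Nat.mod_eq_of_lt (show 2 < m + 1 + 1 + 1 by omega)]

lemma cyc_succ3 (m : ℕ) (i : Fin m) : cyc m i.succ.succ.succ = i.succ.succ.succ := by
  obtain ⟨h0, h1, h2⟩ := fin3_ne m i
  rw [cyc, Equiv.trans_apply, Equiv.swap_apply_of_ne_of_ne h0 h1,
    Equiv.swap_apply_of_ne_of_ne h0 h2]

lemma permList_expand (m : ℕ) (p : Equiv.Perm (Fin (m + 3))) :
    permList (m + 3) p = ((p 0 : ℕ) + 1) :: ((p 1 : ℕ) + 1) :: ((p 2 : ℕ) + 1) ::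
      List.ofFn (fun i : Fin m => (p i.succ.succ.succ : ℕ) + 1) := by
  simp [permList, List.ofFn_succ, Fin.succ_zero_eq_one, Fin.succ_one_eq_two]

lemma permList_mul (m : ℕ) (q : Equiv.Perm (Fin (m + 3))) :
    permList (m + 3) (q * cyc m) = ((q 1 : ℕ) + 1) :: ((q 2 : ℕ) + 1) :: ((q 0 : ℕ) + 1) ::
      List.ofFn (fun i : Fin m => (q i.succ.succ.succ : ℕ) + 1) := by
  rw [permList_expand]
  simp [Equiv.Perm.mul_apply, cyc_zero, cyc_one, cyc_two, cyc_succ3]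

end Assembly

/-- For `n ≥ 3`, the number of permutations `p` of `{1,…,n}` in
which the first entry `p_1` has exactly one child in the minmax tree is `2·n!/3`. -/
theorem first_entry_one_child_count (n : ℕ) (hn : 3 ≤ n) :
    (Finset.univ.filter (fun p : Equiv.Perm (Fin n) =>
        (minmaxTree (permList n p)).numChildren (entryAt n p 1) = 1)).card =
      2 * n.factorial / 3 := by
  obtain ⟨m, rfl⟩ : ∃ m, n = m + 3 := ⟨n - 3, by omega⟩
  have hnd : ∀ p : Equiv.Perm (Fin (m + 3)), (permList (m + 3) p).Nodup := by
    intro p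
    rw [permList]
    refine List.nodup_ofFn.mpr ?_
    intro i j h
    simp only [Nat.add_right_cancel_iff] at h
    exact p.injective (Fin.val_injective h)
  have hpred : ∀ p : Equiv.Perm (Fin (m + 3)),
      ((minmaxTree (permList (m + 3) p)).numChildren (entryAt (m + 3) p 1) = 1) ↔
        (Good (permList (m + 3) p) = true) := by
    intro p
    have hne : permList (m + 3) p ≠ [] := by rw [permList_expand]; simp
    have hent : entryAt (m + 3) p 1 = (permList (m + 3) p).getD 0 0 := rfl
    rw [hent, numChildren_head (hnd p) hne]
    cases hG : Good (permList (m + 3) p) <;> simp [hG]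
  have hfilter : (Finset.univ.filter (fun p : Equiv.Perm (Fin (m + 3)) =>
      (minmaxTree (permList (m + 3) p)).numChildren (entryAt (m + 3) p 1) = 1)) =
      Finset.univ.filter (fun p => Good (permList (m + 3) p) = true) :=
    Finset.filter_congr (fun p _ => hpred p)
  rw [hfilter, Finset.card_filter]
  set g : Equiv.Perm (Fin (m + 3)) → ℕ :=
    fun p => if Good (permList (m + 3) p) = true then 1 else 0 with hg
  have hrot : ∀ p : Equiv.Perm (Fin (m + 3)),
      g p + g (p * cyc m) + g (p * cyc m * cyc m) = 2 := by
    intro p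
    have h1 := permList_expand m p
    have h2 := permList_mul m p
    have h3 := permList_mul m (p * cyc m)
    simp only [Equiv.Perm.mul_apply, cyc_zero, cyc_one, cyc_two, cyc_succ3] at h3
    have hnd1 : (((p 0 : ℕ) + 1) :: ((p 1 : ℕ) + 1) :: ((p 2 : ℕ) + 1) ::
        List.ofFn (fun i : Fin m => (p i.succ.succ.succ : ℕ) + 1)).Nodup := h1 ▸ hnd p
    simp only [hg, h1, h2, h3]
    exact rot_aux ((List.ofFn (fun i : Fin m => (p i.succ.succ.succ : ℕ) + 1)).length + 1)
      _ _ _ _ (by omega) hnd1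
  have hsum : ∑ p : Equiv.Perm (Fin (m + 3)),
      (g p + g (p * cyc m) + g (p * cyc m * cyc m)) =
      2 * Fintype.card (Equiv.Perm (Fin (m + 3))) := by
    rw [Finset.sum_congr rfl (fun p _ => hrot p), Finset.sum_const, Finset.card_univ,
      smul_eq_mul, mul_comm]
  have e1 : ∑ p : Equiv.Perm (Fin (m + 3)), g (p * cyc m) = ∑ p, g p :=
    Fintype.sum_bijective (Equiv.mulRight (cyc m)) (Equiv.bijective _) _ _
      (fun p => rfl)
  have e2 : ∑ p : Equiv.Perm (Fin (m + 3)), g (p * cyc m * cyc m) = ∑ p, g p :=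
    Fintype.sum_bijective ((Equiv.mulRight (cyc m)).trans (Equiv.mulRight (cyc m)))
      (Equiv.bijective _) _ _
      (fun p => rfl)
  rw [Finset.sum_add_distrib, Finset.sum_add_distrib, e1, e2] at hsum
  rw [Fintype.card_perm, Fintype.card_fin] at hsum
  show (∑ p : Equiv.Perm (Fin (m + 3)), g p) = 2 * (m + 3).factorial / 3
  omega
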